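/- Let n ≥ 5 and let G be a simple graph containing pairwise distinct vertices v₀, v₁, ..., v_{n−1} forming a cycle (so v_i is adjacent to v_{i+1} for 0 ≤ i ≤ n−2, and v_{n−1} is adjacent to v₀), together with a vertex w distinct from all the v_i that is adjacent to v₀. Suppose G contains no 4-cycle, i.e., there are no four pairwise distinct vertices p, q, r, s with pq, qr, rs, and sp all edges of G. Color grey the edge wv₀ together with the edges v_iv_{i+1} for 0 ≤ i ≤ n−2 (so the grey edges form a path w–v₀–v₁–⋯–v_{n−1}), and color all other edges of G black (including v_{n−1}v₀). Then every color-preserving automorphism of this 2-colored graph fixes w and fixes each vertex v_i. -/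
import Mathlib


/-- A graph automorphism `φ` of `G` is color-preserving with respect to the
edge 2-coloring `col` (say `true` = grey, `false` = black) if every edge and
its image have the same color. -/
def IsColorPreserving {V : Type*} (G : SimpleGraph V) (col : Sym2 V → Bool)
    (φ : G ≃g G) : Prop :=
  ∀ u v : V, G.Adj u v → col s(φ u, φ v) = col s(u, v)

lemma path_rigid {V : Type*} (n : ℕ) (hn : 2 ≤ n) (f : ℕ → V)
    (finj : ∀ i, i ≤ n → ∀ j, j ≤ n → f i = f j → i = j)
    (Gr : V → V → Prop)
    (hchar : ∀ a b, Gr a b ↔ ∃ j, j + 1 ≤ n ∧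
      ((a = f j ∧ b = f (j+1)) ∨ (b = f j ∧ a = f (j+1))))
    (φ : V ≃ V)
    (hφ : ∀ a b, Gr a b ↔ Gr (φ a) (φ b)) :
    (∀ j, j ≤ n → φ (f j) = f j) ∨ (∀ j, j ≤ n → φ (f j) = f (n - j)) := by
  have hsymm : ∀ a b, Gr a b → Gr b a := by
    intro a b h
    rw [hchar] at h ⊢
    obtain ⟨j, hj, h⟩ := h
    exact ⟨j, hj, h.symm⟩
  have L4 : ∀ j, j + 1 ≤ n → Gr (f j) (f (j+1)) := fun j hj =>
    (hchar _ _).2 ⟨j, hj, Or.inl ⟨rfl, rfl⟩⟩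
  have L3 : ∀ j, j ≤ n → ∀ x, Gr (f j) x →
      (∃ k, j = k + 1 ∧ x = f k) ∨ (j + 1 ≤ n ∧ x = f (j+1)) := by
    intro j hj x hx
    rw [hchar] at hx
    obtain ⟨k, hk, h | h⟩ := hx
    · have hjk : j = k := finj j hj k (by omega) h.1
      exact Or.inr ⟨by omega, by rw [h.2, hjk]⟩
    · have hjk : j = k + 1 := finj j hj (k+1) hk h.2
      exact Or.inl ⟨k, hjk, h.1⟩
  have hmem : ∀ a x, Gr a x → ∃ m, m ≤ n ∧ a = f m := by
    intro a x h
    rw [hchar] at h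
    obtain ⟨j, hj, h | h⟩ := h
    · exact ⟨j, by omega, h.1⟩
    · exact ⟨j + 1, hj, h.2⟩
  have hnbr0 : ∀ x, Gr (f 0) x → x = f 1 := by
    intro x hx
    rcases L3 0 (by omega) x hx with ⟨k, hk, _⟩ | ⟨_, h⟩
    · omega
    · exact h
  have h01 : Gr (f 0) (f 1) := L4 0 (by omega)
  obtain ⟨m, hm, hφ0⟩ := hmem _ _ ((hφ _ _).1 h01)
  have hm0n : m = 0 ∨ m = n := by
    by_contra hcon
    push_neg at hcon
    have hm1 : 1 ≤ m := by omega
    have hm2 : m + 1 ≤ n := by omega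
    have e1 : φ (f 1) = f (m+1) := by
      have h1 : Gr (φ (f 0)) (f (m+1)) := by rw [hφ0]; exact L4 m hm2
      have h2 : Gr (f 0) (φ.symm (f (m+1))) := by
        rw [hφ _ _]
        simpa using h1
      have h3 := hnbr0 _ h2
      have h5 := congrArg φ h3
      rw [Equiv.apply_symm_apply] at h5
      exact h5.symm
    have e2 : φ (f 1) = f (m-1) := by
      have h1 : Gr (φ (f 0)) (f (m-1)) := by
        rw [hφ0]
        have h4 := L4 (m-1) (by omega)
        have hm' : m - 1 + 1 = m := by omega
        rw [hm'] at h4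
        exact hsymm _ _ h4
      have h2 : Gr (f 0) (φ.symm (f (m-1))) := by
        rw [hφ _ _]
        simpa using h1
      have h3 := hnbr0 _ h2
      have h5 := congrArg φ h3
      rw [Equiv.apply_symm_apply] at h5
      exact h5.symm
    have : m + 1 = m - 1 := finj _ hm2 _ (by omega) (by rw [← e1, e2])
    omega
  rcases hm0n with rfl | hmn
  · left
    intro j
    induction j using Nat.strong_induction_on with
    | _ j IH =>
      intro hj
      rcases j with _ | k
      · exact hφ0
      · have hk : φ (f k) = f k := IH k (by omega) (by omega)
        have hg : Gr (f k) (φ (f (k+1))) := by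
          have := (hφ _ _).1 (L4 k hj)
          rwa [hk] at this
        rcases L3 k (by omega) _ hg with ⟨m', hm', hx⟩ | ⟨_, hx⟩
        · exfalso
          have hm'' : φ (f m') = f m' := IH m' (by omega) (by omega)
          have : f (k+1) = f m' := φ.injective (by rw [hx, hm''])
          have := finj _ hj m' (by omega) this
          omega
        · exact hx
  · right
    rw [hmn] at hφ0
    intro j
    induction j using Nat.strong_induction_on with
    | _ j IH =>
      intro hj
      rcases j with _ | k
      · simpa using hφ0
      · have hk : φ (f k) = f (n - k) := IH k (by omega) (by omega)
        have hg : Gr (f (n - k)) (φ (f (k+1))) := by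
          have := (hφ _ _).1 (L4 k hj)
          rwa [hk] at this
        rcases L3 (n - k) (by omega) _ hg with ⟨m', hm', hx⟩ | ⟨hle, hx⟩
        · have : m' = n - (k+1) := by omega
          rw [hx, this]
        · exfalso
          have hk1 : 1 ≤ k := by omega
          have hm'' : φ (f (k-1)) = f (n - (k-1)) := IH (k-1) (by omega) (by omega)
          have heq : n - k + 1 = n - (k - 1) := by omega
          have : f (k+1) = f (k-1) := φ.injective (by rw [hx, hm'', heq])
          have := finj _ hj (k-1) (by omega) this
          omega

/-- Let `n ≥ 5` and let `G` contain pairwise distinct vertices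
`v₀, …, v_{n-1}` forming a cycle, together with a vertex `w` (distinct from
all the `vᵢ`) adjacent to `v₀`.  Suppose `G` contains no 4-cycle.  Color grey
the edge `w v₀` together with the edges `vᵢ v_{i+1}` for `0 ≤ i ≤ n − 2` (a
grey path `w–v₀–v₁–⋯–v_{n−1}`) and all other edges black (including
`v_{n−1} v₀`).  Then every color-preserving automorphism of this 2-colored
graph fixes `w` and every `vᵢ`. -/
theorem stmt_16 {V : Type*} [DecidableEq V] (G : SimpleGraph V)
    (n : ℕ) (hn : 5 ≤ n) (v : Fin n → V) (w : V)
    (hv : Function.Injective v) (hw : ∀ i, w ≠ v i)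
    (hadj : ∀ i : Fin n, i.val ≤ n - 2 → G.Adj (v i) (v (i + ⟨1, by omega⟩)))
    (hlast : G.Adj (v ⟨n - 1, by omega⟩) (v ⟨0, by omega⟩))
    (hwadj : G.Adj w (v ⟨0, by omega⟩))
    (h4cyclefree : ¬ ∃ p q r s : V, p ≠ q ∧ p ≠ r ∧ p ≠ s ∧ q ≠ r ∧ q ≠ s ∧ r ≠ s ∧
      G.Adj p q ∧ G.Adj q r ∧ G.Adj r s ∧ G.Adj s p)
    (φ : G ≃g G)
    (hφ : IsColorPreserving G
      (fun e => decide (e = s(w, v ⟨0, by omega⟩) ∨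
        ∃ i : Fin n, i.val ≤ n - 2 ∧ e = s(v i, v (i + ⟨1, by omega⟩)))) φ) :
    φ w = w ∧ ∀ i, φ (v i) = v i := by
  have hn1 : 1 ≤ n := by omega
  set Gr : V → V → Prop := fun a b =>
    (s(a, b) = s(w, v ⟨0, by omega⟩) ∨
      ∃ i : Fin n, i.val ≤ n - 2 ∧ s(a, b) = s(v i, v (i + ⟨1, by omega⟩))) with hGrdef
  set f : ℕ → V := fun j => if h : 1 ≤ j ∧ j ≤ n then v ⟨j - 1, by omega⟩ else w with hfdef
  have hf0 : f 0 = w := by simp [hfdef]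
  have hfv : ∀ j (h1 : 1 ≤ j) (h2 : j ≤ n), f j = v ⟨j - 1, by omega⟩ := by
    intro j h h2
    simp [hfdef, h, h2]
  have hvi : ∀ i : Fin n, v i = f (i.val + 1) := by
    intro i
    rw [hfv (i.val + 1) (by omega) (by omega)]
    congr 1
  have hfin1 : ∀ (i : Fin n) (hi : i.val ≤ n - 2),
      i + (⟨1, by omega⟩ : Fin n) = ⟨i.val + 1, by omega⟩ := by
    intro i hi
    apply Fin.ext
    rw [Fin.add_def]
    simp only [Fin.val_mk]
    exact Nat.mod_eq_of_lt (by omega)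
  have hstep : ∀ (i : Fin n) (hi : i.val ≤ n - 2),
      v (i + (⟨1, by omega⟩ : Fin n)) = f (i.val + 2) := by
    intro i hi
    rw [hfin1 i hi, hfv (i.val + 2) (by omega) (by omega)]
    congr 1
  have finj : ∀ i, i ≤ n → ∀ j, j ≤ n → f i = f j → i = j := by
    intro i hi j hj hij
    rcases Nat.eq_zero_or_pos i with hi0 | hi1 <;> rcases Nat.eq_zero_or_pos j with hj0 | hj1
    · omega
    · subst hi0
      rw [hf0, hfv j hj1 hj] at hij
      exact absurd hij (hw _)
    · subst hj0
      rw [hf0, hfv i hi1 hi] at hij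
      exact absurd hij.symm (hw _)
    · rw [hfv i hi1 hi, hfv j hj1 hj] at hij
      have h2 := hv hij
      rw [Fin.mk.injEq] at h2
      omega
  have hf1 : f 1 = v ⟨0, by omega⟩ := by rw [hfv 1 le_rfl hn1]
  -- characterization of Gr via f
  have hchar : ∀ a b, Gr a b ↔ ∃ j, j + 1 ≤ n ∧
      ((a = f j ∧ b = f (j+1)) ∨ (b = f j ∧ a = f (j+1))) := by
    intro a b
    constructor
    · rintro (h | ⟨i, hi, h⟩)
      · rw [Sym2.eq_iff] at h
        refine ⟨0, by omega, ?_⟩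
        rcases h with ⟨h1, h2⟩ | ⟨h1, h2⟩
        · exact Or.inl ⟨by rw [h1, hf0], by rw [h2, hf1]⟩
        · exact Or.inr ⟨by rw [h2, hf0], by rw [h1, hf1]⟩
      · rw [hvi i, hstep i hi, Sym2.eq_iff] at h
        refine ⟨i.val + 1, by omega, ?_⟩
        have e2 : f (i.val + 2) = f (i.val + 1 + 1) := rfl
        rcases h with ⟨h1, h2⟩ | ⟨h1, h2⟩
        · exact Or.inl ⟨h1, by rw [h2, e2]⟩
        · exact Or.inr ⟨h2, by rw [h1, e2]⟩
    · rintro ⟨j, hj, h⟩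
      rcases Nat.eq_zero_or_pos j with rfl | hj1
      · left
        rw [Sym2.eq_iff]
        have hf1' : f (0+1) = v ⟨0, by omega⟩ := hf1
        rcases h with ⟨h1, h2⟩ | ⟨h1, h2⟩
        · exact Or.inl ⟨by rw [h1, hf0], by rw [h2, hf1']⟩
        · exact Or.inr ⟨by rw [h2, hf1'], by rw [h1, hf0]⟩
      · right
        refine ⟨⟨j - 1, by omega⟩, show j - 1 ≤ n - 2 by omega, ?_⟩
        rw [hvi ⟨j - 1, by omega⟩, hstep ⟨j - 1, by omega⟩ (show j - 1 ≤ n - 2 by omega)]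
        have e1 : f ((⟨j - 1, by omega⟩ : Fin n).val + 1) = f j := by
          congr 1
          show j - 1 + 1 = j
          omega
        have e2 : f ((⟨j - 1, by omega⟩ : Fin n).val + 2) = f (j + 1) := by
          congr 1
          show j - 1 + 2 = j + 1
          omega
        rw [e1, e2]
        rcases h with ⟨h1, h2⟩ | ⟨h1, h2⟩
        · rw [h1, h2]
        · rw [h1, h2, Sym2.eq_swap]
  have hGrAdj : ∀ a b, Gr a b → G.Adj a b := by
    intro a b h
    rcases h with h | ⟨i, hi, h⟩
    · rw [Sym2.eq_iff] at h
      rcases h with ⟨h1, h2⟩ | ⟨h1, h2⟩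
      · rw [h1, h2]; exact hwadj
      · rw [h1, h2]; exact hwadj.symm
    · rw [Sym2.eq_iff] at h
      rcases h with ⟨h1, h2⟩ | ⟨h1, h2⟩
      · rw [h1, h2]; exact hadj i hi
      · rw [h1, h2]; exact (hadj i hi).symm
  have hφiff : ∀ a b, Gr a b ↔ Gr (φ a) (φ b) := by
    intro a b
    constructor
    · intro h
      have h2 := decide_eq_decide.mp (hφ a b (hGrAdj a b h))
      exact h2.mpr h
    · intro h
      have hadj' : G.Adj a b := φ.map_adj_iff.mp (hGrAdj _ _ h)
      have h2 := decide_eq_decide.mp (hφ a b hadj')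
      exact h2.mp h
  rcases path_rigid n (by omega) f finj Gr hchar φ.toEquiv hφiff with hid | hrev
  · constructor
    · have h0 := hid 0 (by omega)
      rwa [hf0] at h0
    · intro i
      have h1 := hid (i.val + 1) (by omega)
      rwa [← hvi i] at h1
  · exfalso
    have ha : φ (f n) = f 0 := by simpa using hrev n le_rfl
    have hb : φ (f 1) = f (n - 1) := hrev 1 (by omega)
    have hfn : f n = v ⟨n - 1, by omega⟩ := hfv n hn1 le_rfl
    have hfn1 : f (n - 1) = v ⟨n - 2, by omega⟩ := by
      rw [hfv (n-1) (by omega) (by omega)]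
      congr 1
    have hadj1 : G.Adj (f n) (f 1) := by rw [hfn, hf1]; exact hlast
    have hadj2 : G.Adj (φ (f n)) (φ (f 1)) := φ.map_adj_iff.mpr hadj1
    rw [ha, hb, hf0, hfn1] at hadj2
    -- hadj2 : G.Adj w (v ⟨n-2⟩)
    have hedge3 : G.Adj (v ⟨n - 1, by omega⟩) (v ⟨n - 2, by omega⟩) := by
      have h5 := hadj ⟨n - 2, by omega⟩ (show n - 2 ≤ n - 2 from le_rfl)
      rw [hfin1 ⟨n - 2, by omega⟩ (show n - 2 ≤ n - 2 from le_rfl)] at h5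
      have e : (⟨(⟨n - 2, by omega⟩ : Fin n).val + 1, by show n - 2 + 1 < n; omega⟩ : Fin n) = ⟨n - 1, by omega⟩ :=
        Fin.ext (show n - 2 + 1 = n - 1 by omega)
      rw [e] at h5
      exact h5.symm
    apply h4cyclefree
    refine ⟨w, v ⟨0, by omega⟩, v ⟨n - 1, by omega⟩, v ⟨n - 2, by omega⟩,
      hw _, hw _, hw _, ?_, ?_, ?_, hwadj, hlast.symm, hedge3, hadj2.symm⟩
    · intro h
      have h2 := hv h
      rw [Fin.mk.injEq] at h2
      omega
    · intro h
      have h2 := hv h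
      rw [Fin.mk.injEq] at h2
      omega
    · intro h
      have h2 := hv h
      rw [Fin.mk.injEq] at h2
      omega
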